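/- For a Hermitian matrix M of size n and its main minor M' of size n−1 (obtained by deleting the last row and column), the ordered eigenvalues μ₁ ≥ ... ≥ μ_{n-1} of M' interlace the ordered eigenvalues λ₁ ≥ ... ≥ λ_n of M: λ₁ ≥ μ₁ ≥ λ₂ ≥ μ₂ ≥ ... ≥ μ_{n-1} ≥ λ_n. -/

import Mathlib

open Matrix
noncomputable section
variable {m : ℕ}
local notation "⟪" x ", " y "⟫" => @inner ℂ _ _ x y

lemma repr_toEuclideanLin (A : Matrix (Fin m) (Fin m) ℂ) (hA : A.IsHermitian)
    (x : EuclideanSpace ℂ (Fin m)) (j : Fin m) :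
    hA.eigenvectorBasis.repr (Matrix.toEuclideanLin A x) j
      = hA.eigenvalues j * hA.eigenvectorBasis.repr x j := by
  rw [OrthonormalBasis.repr_apply_apply, OrthonormalBasis.repr_apply_apply]
  rw [← (Matrix.isHermitian_iff_isSymmetric.1 hA) (hA.eigenvectorBasis j) x]
  have h : Matrix.toEuclideanLin A (hA.eigenvectorBasis j)
      = (hA.eigenvalues j : ℂ) • (hA.eigenvectorBasis j) := by
    have := hA.mulVec_eigenvectorBasis j
    rw [Matrix.toEuclideanLin_apply]
    ext i
    have := congrFun this i
    simp only [Pi.smul_apply, smul_eq_mul] at this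
    simpa [Complex.real_smul] using this
  rw [h, inner_smul_left]
  simp [Complex.conj_ofReal]

lemma quad_expand (A : Matrix (Fin m) (Fin m) ℂ) (hA : A.IsHermitian)
    (x : EuclideanSpace ℂ (Fin m)) :
    (⟪x, Matrix.toEuclideanLin A x⟫).re
      = ∑ j, hA.eigenvalues j * ‖hA.eigenvectorBasis.repr x j‖ ^ 2 := by
  set b := hA.eigenvectorBasis
  have h1 : ⟪x, Matrix.toEuclideanLin A x⟫
      = ⟪b.repr x, b.repr (Matrix.toEuclideanLin A x)⟫ := by
    rw [← b.repr.inner_map_map]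
  rw [h1, PiLp.inner_apply]
  rw [Complex.re_sum]
  refine Finset.sum_congr rfl fun j _ => ?_
  rw [repr_toEuclideanLin A hA x j]
  have : (↑(hA.eigenvalues j) * b.repr x j) * (starRingEnd ℂ) (b.repr x j)
      = (hA.eigenvalues j : ℂ) * ((starRingEnd ℂ) (b.repr x j) * b.repr x j) := by ring
  rw [RCLike.inner_apply]
  erw [this, Complex.conj_mul']
  rw [show ((hA.eigenvalues j : ℂ) * (‖b.repr x j‖ : ℂ) ^ 2)
      = ((hA.eigenvalues j * ‖b.repr x j‖ ^ 2 : ℝ) : ℂ) by push_cast; ring]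
  rw [Complex.ofReal_re]

lemma norm_sq_expand (b : OrthonormalBasis (Fin m) ℂ (EuclideanSpace ℂ (Fin m)))
    (x : EuclideanSpace ℂ (Fin m)) :
    ‖x‖ ^ 2 = ∑ j, ‖b.repr x j‖ ^ 2 := by
  rw [← b.repr.norm_map x, EuclideanSpace.norm_eq,
    Real.sq_sqrt (by positivity)]

lemma repr_eq_zero_of_mem_span (b : OrthonormalBasis (Fin m) ℂ (EuclideanSpace ℂ (Fin m)))
    (P : Fin m → Prop) (x : EuclideanSpace ℂ (Fin m))
    (hx : x ∈ Submodule.span ℂ (Set.range fun j : {j // P j} => b j.1))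
    (j : Fin m) (hj : ¬ P j) : b.repr x j = 0 := by
  rw [OrthonormalBasis.repr_apply_apply]
  have hle : Submodule.span ℂ (Set.range fun j : {j // P j} => b j.1)
      ≤ LinearMap.ker (innerSL ℂ (b j) : EuclideanSpace ℂ (Fin m) →L[ℂ] ℂ).toLinearMap := by
    rw [Submodule.span_le]
    rintro _ ⟨⟨k, hk⟩, rfl⟩
    simp only [SetLike.mem_coe, LinearMap.mem_ker, ContinuousLinearMap.coe_coe, innerSL_apply_apply]
    exact b.orthonormal.2 (fun h => hj (h ▸ hk))
  exact hle hx

lemma quad_le_of_mem_span (A : Matrix (Fin m) (Fin m) ℂ) (hA : A.IsHermitian) (t : ℝ)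
    (x : EuclideanSpace ℂ (Fin m))
    (hx : x ∈ Submodule.span ℂ
      (Set.range fun j : {j // hA.eigenvalues j ≤ t} => hA.eigenvectorBasis j.1)) :
    (⟪x, Matrix.toEuclideanLin A x⟫).re ≤ t * ‖x‖ ^ 2 := by
  rw [quad_expand A hA, norm_sq_expand hA.eigenvectorBasis, Finset.mul_sum]
  refine Finset.sum_le_sum fun j _ => ?_
  by_cases hj : hA.eigenvalues j ≤ t
  · exact mul_le_mul_of_nonneg_right hj (by positivity)
  · rw [repr_eq_zero_of_mem_span _ _ _ hx j hj]
    simp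

lemma quad_ge_of_mem_span (A : Matrix (Fin m) (Fin m) ℂ) (hA : A.IsHermitian) (t : ℝ)
    (x : EuclideanSpace ℂ (Fin m))
    (hx : x ∈ Submodule.span ℂ
      (Set.range fun j : {j // t ≤ hA.eigenvalues j} => hA.eigenvectorBasis j.1)) :
    t * ‖x‖ ^ 2 ≤ (⟪x, Matrix.toEuclideanLin A x⟫).re := by
  rw [quad_expand A hA, norm_sq_expand hA.eigenvectorBasis, Finset.mul_sum]
  refine Finset.sum_le_sum fun j _ => ?_
  by_cases hj : t ≤ hA.eigenvalues j
  · exact mul_le_mul_of_nonneg_right hj (by positivity)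
  · rw [repr_eq_zero_of_mem_span _ _ _ hx j hj]
    simp

lemma finrank_span_orthnl (b : OrthonormalBasis (Fin m) ℂ (EuclideanSpace ℂ (Fin m)))
    (P : Fin m → Prop) [DecidablePred P] :
    Module.finrank ℂ (Submodule.span ℂ (Set.range fun j : {j // P j} => b j.1))
      = (Finset.univ.filter P).card := by
  have h := finrank_span_eq_card
    ((b.orthonormal.comp (Subtype.val : {j // P j} → Fin m)
      Subtype.val_injective).linearIndependent)
  exact h.trans (Fintype.card_subtype P)

lemma exists_quad_le (A : Matrix (Fin m) (Fin m) ℂ) (hA : A.IsHermitian) (t : ℝ)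
    (S : Submodule ℂ (EuclideanSpace ℂ (Fin m)))
    (h : m < Module.finrank ℂ S
      + (Finset.univ.filter (fun j => hA.eigenvalues j ≤ t)).card) :
    ∃ x ∈ S, x ≠ 0 ∧ (⟪x, Matrix.toEuclideanLin A x⟫).re ≤ t * ‖x‖ ^ 2 := by
  classical
  set W := Submodule.span ℂ
    (Set.range fun j : {j // hA.eigenvalues j ≤ t} => hA.eigenvectorBasis j.1) with hW
  have hWrank : Module.finrank ℂ W
      = (Finset.univ.filter (fun j => hA.eigenvalues j ≤ t)).card :=
    finrank_span_orthnl hA.eigenvectorBasis _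
  have hne : S ⊓ W ≠ ⊥ := by
    intro hbot
    have h1 := Submodule.finrank_sup_add_finrank_inf_eq S W
    have h2 : Module.finrank ℂ ↥(S ⊔ W) ≤ m := by
      simpa [finrank_euclideanSpace_fin] using (Submodule.finrank_le (S ⊔ W))
    rw [hbot, finrank_bot] at h1
    omega
  obtain ⟨x, hx, hx0⟩ := Submodule.exists_mem_ne_zero_of_ne_bot hne
  exact ⟨x, hx.1, hx0, quad_le_of_mem_span A hA t x hx.2⟩

lemma exists_quad_ge (A : Matrix (Fin m) (Fin m) ℂ) (hA : A.IsHermitian) (t : ℝ)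
    (S : Submodule ℂ (EuclideanSpace ℂ (Fin m)))
    (h : m < Module.finrank ℂ S
      + (Finset.univ.filter (fun j => t ≤ hA.eigenvalues j)).card) :
    ∃ x ∈ S, x ≠ 0 ∧ t * ‖x‖ ^ 2 ≤ (⟪x, Matrix.toEuclideanLin A x⟫).re := by
  classical
  set W := Submodule.span ℂ
    (Set.range fun j : {j // t ≤ hA.eigenvalues j} => hA.eigenvectorBasis j.1) with hW
  have hWrank : Module.finrank ℂ W
      = (Finset.univ.filter (fun j => t ≤ hA.eigenvalues j)).card :=
    finrank_span_orthnl hA.eigenvectorBasis _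
  have hne : S ⊓ W ≠ ⊥ := by
    intro hbot
    have h1 := Submodule.finrank_sup_add_finrank_inf_eq S W
    have h2 : Module.finrank ℂ ↥(S ⊔ W) ≤ m := by
      simpa [finrank_euclideanSpace_fin] using (Submodule.finrank_le (S ⊔ W))
    rw [hbot, finrank_bot] at h1
    omega
  obtain ⟨x, hx, hx0⟩ := Submodule.exists_mem_ne_zero_of_ne_bot hne
  exact ⟨x, hx.1, hx0, quad_ge_of_mem_span A hA t x hx.2⟩

lemma card_filter_eq_of_map_eq {k : ℕ} (f g : Fin k → ℝ)
    (h : Multiset.map f Finset.univ.val = Multiset.map g Finset.univ.val)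
    (P : ℝ → Prop) [DecidablePred P] :
    (Finset.univ.filter fun j => P (f j)).card
      = (Finset.univ.filter fun j => P (g j)).card := by
  have h2 := congrArg (Multiset.countP P) h
  rwa [Multiset.countP_map, Multiset.countP_map] at h2

def padMap (n : ℕ) : EuclideanSpace ℂ (Fin n) →ₗ[ℂ] EuclideanSpace ℂ (Fin (n + 1)) where
  toFun x := WithLp.toLp 2 (fun i => if h : (i : ℕ) < n then x ⟨i, h⟩ else 0)
  map_add' x y := by
    ext i
    by_cases h : (i : ℕ) < n <;> simp [h, PiLp.add_apply]
  map_smul' c x := by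
    ext i
    by_cases h : (i : ℕ) < n <;> simp [h, PiLp.smul_apply]

lemma padMap_castSucc {n : ℕ} (x : EuclideanSpace ℂ (Fin n)) (i : Fin n) :
    padMap n x i.castSucc = x i := by
  simp [padMap, i.isLt, Fin.castSucc]

lemma padMap_last {n : ℕ} (x : EuclideanSpace ℂ (Fin n)) :
    padMap n x (Fin.last n) = 0 := by
  simp [padMap]

lemma padMap_inj {n : ℕ} : Function.Injective (padMap n) := by
  intro x y hxy
  ext i
  have h := congrFun (congrArg (fun v : EuclideanSpace ℂ (Fin (n+1)) => (v : Fin (n+1) → ℂ)) hxy) i.castSucc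
  simpa [padMap_castSucc] using h

lemma padMap_norm_sq {n : ℕ} (x : EuclideanSpace ℂ (Fin n)) :
    ‖padMap n x‖ ^ 2 = ‖x‖ ^ 2 := by
  rw [EuclideanSpace.norm_eq, EuclideanSpace.norm_eq,
    Real.sq_sqrt (by positivity), Real.sq_sqrt (by positivity)]
  rw [Fin.sum_univ_castSucc]
  simp [padMap_castSucc, padMap_last]

lemma inner_toEuclideanLin {k : ℕ} (A : Matrix (Fin k) (Fin k) ℂ)
    (x : EuclideanSpace ℂ (Fin k)) :
    ⟪x, Matrix.toEuclideanLin A x⟫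
      = ∑ i, (starRingEnd ℂ) (x i) * (∑ j, A i j * x j) := by
  rw [PiLp.inner_apply]
  refine Finset.sum_congr rfl fun i _ => ?_
  rw [RCLike.inner_apply, mul_comm]
  rfl

lemma quad_pad {n : ℕ} (M : Matrix (Fin (n + 1)) (Fin (n + 1)) ℂ)
    (x : EuclideanSpace ℂ (Fin n)) :
    ⟪padMap n x, Matrix.toEuclideanLin M (padMap n x)⟫
      = ⟪x, Matrix.toEuclideanLin (M.submatrix Fin.castSucc Fin.castSucc) x⟫ := by
  rw [inner_toEuclideanLin, inner_toEuclideanLin, Fin.sum_univ_castSucc]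
  rw [padMap_last]
  simp only [map_zero, zero_mul, add_zero]
  refine Finset.sum_congr rfl fun i _ => ?_
  rw [padMap_castSucc, Fin.sum_univ_castSucc, padMap_last, mul_zero, add_zero]
  simp only [padMap_castSucc, Matrix.submatrix_apply]

/-- Cauchy interlacing: for a Hermitian matrix `M` of size `n` and
its main minor `M'` of size `n - 1`, the ordered (decreasing) eigenvalues
`μ₁ ≥ ... ≥ μ_{n-1}` of `M'` interlace the ordered eigenvalues
`λ₁ ≥ ... ≥ λ_n` of `M`. -/
theorem minor_eigenvalues_interlace (n : ℕ)
    (M : Matrix (Fin (n + 1)) (Fin (n + 1)) ℂ) (hM : M.IsHermitian)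
    (M' : Matrix (Fin n) (Fin n) ℂ) (hM'def : M' = M.submatrix Fin.castSucc Fin.castSucc)
    (hM' : M'.IsHermitian)
    (lam : Fin (n + 1) → ℝ) (mu : Fin n → ℝ)
    (hlam_dec : Antitone lam) (hmu_dec : Antitone mu)
    (hlam : Multiset.map lam Finset.univ.val = Multiset.map hM.eigenvalues Finset.univ.val)
    (hmu : Multiset.map mu Finset.univ.val = Multiset.map hM'.eigenvalues Finset.univ.val) :
    ∀ i : Fin n, lam i.castSucc ≥ mu i ∧ mu i ≥ lam i.succ := by
  classical
  intro i
  constructor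
  · -- lam i.castSucc ≥ mu i
    set t := lam i.castSucc with ht
    set T := Submodule.span ℂ
      (Set.range fun j : {j // mu i ≤ hM'.eigenvalues j} => hM'.eigenvectorBasis j.1) with hT
    set S := Submodule.map (padMap n) T with hS
    have hSrank : Module.finrank ℂ S = Module.finrank ℂ T :=
      ((Submodule.equivMapOfInjective (padMap n) padMap_inj T).finrank_eq).symm
    have hTrank : Module.finrank ℂ T
        = (Finset.univ.filter fun j => mu i ≤ hM'.eigenvalues j).card :=
      finrank_span_orthnl _ _
    have hc2 : (i : ℕ) + 1 ≤ (Finset.univ.filter fun k => mu i ≤ hM'.eigenvalues k).card := by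
      rw [← card_filter_eq_of_map_eq mu hM'.eigenvalues hmu (fun r => mu i ≤ r)]
      calc (i : ℕ) + 1 = (Finset.Iic i).card := (Fin.card_Iic i).symm
        _ ≤ _ := Finset.card_le_card (fun k hk => by
              simp only [Finset.mem_Iic] at hk
              simp only [Finset.mem_filter, Finset.mem_univ, true_and]
              exact hmu_dec hk)
    have hc1 : (n + 1) - (i : ℕ)
        ≤ (Finset.univ.filter fun j => hM.eigenvalues j ≤ t).card := by
      rw [← card_filter_eq_of_map_eq lam hM.eigenvalues hlam (fun r => r ≤ t)]
      calc (n + 1) - (i : ℕ) = (Finset.Ici i.castSucc).card := by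
            rw [Fin.card_Ici, Fin.coe_castSucc]
        _ ≤ _ := Finset.card_le_card (fun j hj => by
              simp only [Finset.mem_Ici] at hj
              simp only [Finset.mem_filter, Finset.mem_univ, true_and]
              exact hlam_dec hj)
    obtain ⟨xh, hxS, hx0, hquad⟩ := exists_quad_le M hM t S (by
      rw [hSrank, hTrank]
      have hi := i.isLt
      omega)
    obtain ⟨y, hyT, rfl⟩ := hxS
    have hy0 : y ≠ 0 := fun h => hx0 (by rw [h, map_zero])
    have hylb := quad_ge_of_mem_span M' hM' (mu i) y hyT
    have hq := congrArg Complex.re (quad_pad M y)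
    rw [← hM'def] at hq
    rw [hq, padMap_norm_sq] at hquad
    have hpos : 0 < ‖y‖ ^ 2 := pow_pos (norm_pos_iff.mpr hy0) 2
    exact (mul_le_mul_iff_of_pos_right hpos).mp (le_trans hylb hquad)
  · -- mu i ≥ lam i.succ
    set t := lam i.succ with ht
    set T := Submodule.span ℂ
      (Set.range fun j : {j // hM'.eigenvalues j ≤ mu i} => hM'.eigenvectorBasis j.1) with hT
    set S := Submodule.map (padMap n) T with hS
    have hSrank : Module.finrank ℂ S = Module.finrank ℂ T :=
      ((Submodule.equivMapOfInjective (padMap n) padMap_inj T).finrank_eq).symm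
    have hTrank : Module.finrank ℂ T
        = (Finset.univ.filter fun j => hM'.eigenvalues j ≤ mu i).card :=
      finrank_span_orthnl _ _
    have hc2 : n - (i : ℕ) ≤ (Finset.univ.filter fun k => hM'.eigenvalues k ≤ mu i).card := by
      rw [← card_filter_eq_of_map_eq mu hM'.eigenvalues hmu (fun r => r ≤ mu i)]
      calc n - (i : ℕ) = (Finset.Ici i).card := (Fin.card_Ici i).symm
        _ ≤ _ := Finset.card_le_card (fun k hk => by
              simp only [Finset.mem_Ici] at hk
              simp only [Finset.mem_filter, Finset.mem_univ, true_and]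
              exact hmu_dec hk)
    have hc1 : (i : ℕ) + 2 ≤ (Finset.univ.filter fun j => t ≤ hM.eigenvalues j).card := by
      rw [← card_filter_eq_of_map_eq lam hM.eigenvalues hlam (fun r => t ≤ r)]
      calc (i : ℕ) + 2 = (Finset.Iic i.succ).card := by
            rw [Fin.card_Iic, Fin.val_succ]
        _ ≤ _ := Finset.card_le_card (fun j hj => by
              simp only [Finset.mem_Iic] at hj
              simp only [Finset.mem_filter, Finset.mem_univ, true_and]
              exact hlam_dec hj)
    obtain ⟨xh, hxS, hx0, hquad⟩ := exists_quad_ge M hM t S (by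
      rw [hSrank, hTrank]
      have hi := i.isLt
      omega)
    obtain ⟨y, hyT, rfl⟩ := hxS
    have hy0 : y ≠ 0 := fun h => hx0 (by rw [h, map_zero])
    have hyub := quad_le_of_mem_span M' hM' (mu i) y hyT
    have hq := congrArg Complex.re (quad_pad M y)
    rw [← hM'def] at hq
    rw [hq, padMap_norm_sq] at hquad
    have hpos : 0 < ‖y‖ ^ 2 := pow_pos (norm_pos_iff.mpr hy0) 2
    exact (mul_le_mul_iff_of_pos_right hpos).mp (le_trans hquad hyub)
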